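/- Let Γ ⊂ SU(2) be a non-abelian subgroup. If σ ∈ SL(2,ℂ) satisfies σ·γ·σ⁻¹ ∈ SU(2) for all γ ∈ Γ, then σ*·σ is a scalar matrix (equal to the identity in PSL(2,ℂ)), i.e., σ is unitary up to scalar. -/
import Mathlib


open Complex Matrix

lemma mem_span_of_comm (P X : Matrix (Fin 2) (Fin 2) ℂ)
    (hX : X * P = P * X) (hP : ¬ ∃ c : ℂ, P = c • 1) :
    ∃ u s : ℂ, X = u • 1 + s • P := by
  have e01 : X 0 0 * P 0 1 + X 0 1 * P 1 1 = P 0 0 * X 0 1 + P 0 1 * X 1 1 := by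
    have := congrFun (congrFun hX 0) 1
    simpa [Matrix.mul_apply, Fin.sum_univ_two] using this
  have e10 : X 1 0 * P 0 0 + X 1 1 * P 1 0 = P 1 0 * X 0 0 + P 1 1 * X 1 0 := by
    have := congrFun (congrFun hX 1) 0
    simpa [Matrix.mul_apply, Fin.sum_univ_two] using this
  have e00 : X 0 0 * P 0 0 + X 0 1 * P 1 0 = P 0 0 * X 0 0 + P 0 1 * X 1 0 := by
    have := congrFun (congrFun hX 0) 0
    simpa [Matrix.mul_apply, Fin.sum_univ_two] using this
  by_cases hb : P 0 1 ≠ 0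
  · refine ⟨X 0 0 - (X 0 1 / P 0 1) * P 0 0, X 0 1 / P 0 1, ?_⟩
    ext i j
    fin_cases i <;> fin_cases j <;> simp [Matrix.one_apply] <;> field_simp <;>
      first
        | ring1
        | linear_combination e01 | linear_combination -e01
        | linear_combination e00 | linear_combination -e00
        | linear_combination e10 | linear_combination -e10
  · push_neg at hb
    by_cases hc : P 1 0 ≠ 0
    · refine ⟨X 1 1 - (X 1 0 / P 1 0) * P 1 1, X 1 0 / P 1 0, ?_⟩
      ext i j
      fin_cases i <;> fin_cases j <;> simp [Matrix.one_apply] <;> field_simp <;>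
        first
          | ring1
          | linear_combination e01 | linear_combination -e01
          | linear_combination e00 | linear_combination -e00
          | linear_combination e10 | linear_combination -e10
    · push_neg at hc
      have had : P 0 0 ≠ P 1 1 := by
        intro h
        exact hP ⟨P 0 0, by ext i j; fin_cases i <;> fin_cases j <;>
          simp [Matrix.one_apply, hb, hc, h]⟩
      have had' : P 0 0 - P 1 1 ≠ 0 := sub_ne_zero.2 had
      have hX01 : X 0 1 = 0 := by
        rcases mul_eq_zero.1 (show X 0 1 * (P 1 1 - P 0 0) = 0 by
          linear_combination e01 - (X 0 0 - X 1 1) * hb) with h | h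
        · exact h
        · exact absurd (sub_eq_zero.1 h).symm had
      have hX10 : X 1 0 = 0 := by
        rcases mul_eq_zero.1 (show X 1 0 * (P 0 0 - P 1 1) = 0 by
          linear_combination e10 - (X 1 1 - X 0 0) * hc) with h | h
        · exact h
        · exact absurd (sub_eq_zero.1 h) had
      refine ⟨X 0 0 - ((X 0 0 - X 1 1) / (P 0 0 - P 1 1)) * P 0 0,
        (X 0 0 - X 1 1) / (P 0 0 - P 1 1), ?_⟩
      ext i j
      fin_cases i <;> fin_cases j <;> simp [Matrix.one_apply, hb, hc, hX01, hX10] <;>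
        field_simp <;> ring

lemma comm_of_comm (P X Y : Matrix (Fin 2) (Fin 2) ℂ)
    (hX : X * P = P * X) (hY : Y * P = P * Y) (hP : ¬ ∃ c : ℂ, P = c • 1) :
    X * Y = Y * X := by
  obtain ⟨u, s, hXe⟩ := mem_span_of_comm P X hX hP
  obtain ⟨v, t, hYe⟩ := mem_span_of_comm P Y hY hP
  rw [hXe, hYe]
  simp only [add_mul, mul_add, Matrix.smul_mul, Matrix.mul_smul, smul_smul,
    Matrix.one_mul, Matrix.mul_one]
  module

/-- if `Γ` is a non-abelian subgroup of `SU(2)` and `σ ∈ SL(2,ℂ)` conjugates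
`Γ` into `SU(2)`, then `σ* σ` is a scalar matrix. -/
theorem conjugator_of_nonabelian_is_scalar
    (Γ : Subgroup (Matrix.unitaryGroup (Fin 2) ℂ))
    (hsu : ∀ γ ∈ Γ, ((γ : Matrix (Fin 2) (Fin 2) ℂ)).det = 1)
    (hnonab : ∃ γ ∈ Γ, ∃ γ' ∈ Γ, γ * γ' ≠ γ' * γ)
    (σ : Matrix.SpecialLinearGroup (Fin 2) ℂ)
    (hconj : ∀ γ ∈ Γ,
      (σ : Matrix (Fin 2) (Fin 2) ℂ) * (γ : Matrix (Fin 2) (Fin 2) ℂ) *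
          ((σ⁻¹ : Matrix.SpecialLinearGroup (Fin 2) ℂ) : Matrix (Fin 2) (Fin 2) ℂ) ∈
        Matrix.unitaryGroup (Fin 2) ℂ) :
    ∃ c : ℂ, (σ : Matrix (Fin 2) (Fin 2) ℂ)ᴴ * (σ : Matrix (Fin 2) (Fin 2) ℂ) =
      c • (1 : Matrix (Fin 2) (Fin 2) ℂ) := by
  by_contra hP
  set s : Matrix (Fin 2) (Fin 2) ℂ := (σ : Matrix (Fin 2) (Fin 2) ℂ) with hs
  set si : Matrix (Fin 2) (Fin 2) ℂ :=
    ((σ⁻¹ : Matrix.SpecialLinearGroup (Fin 2) ℂ) : Matrix (Fin 2) (Fin 2) ℂ) with hsi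
  have h1 : si * s = 1 := by
    rw [hs, hsi, ← Matrix.SpecialLinearGroup.coe_mul, inv_mul_cancel,
      Matrix.SpecialLinearGroup.coe_one]
  have h3 : ∀ X : Matrix (Fin 2) (Fin 2) ℂ, sᴴ * (siᴴ * X) = X := by
    intro X
    rw [← Matrix.mul_assoc, ← conjTranspose_mul, h1, conjTranspose_one, Matrix.one_mul]
  have hcomm : ∀ γ, γ ∈ Γ → (γ : Matrix (Fin 2) (Fin 2) ℂ) * (sᴴ * s)
      = (sᴴ * s) * (γ : Matrix (Fin 2) (Fin 2) ℂ) := by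
    intro γ hγ
    set g : Matrix (Fin 2) (Fin 2) ℂ := (γ : Matrix (Fin 2) (Fin 2) ℂ) with hg
    have hg2 : ∀ X : Matrix (Fin 2) (Fin 2) ℂ, g * (gᴴ * X) = X := by
      intro X
      rw [← Matrix.mul_assoc, ← Matrix.star_eq_conjTranspose,
        Matrix.mem_unitaryGroup_iff.1 γ.2, Matrix.one_mul]
    have hu : (s * g * si)ᴴ * (s * g * si) = 1 := by
      have := Matrix.mem_unitaryGroup_iff'.1 (hconj γ hγ)
      rwa [Matrix.star_eq_conjTranspose] at this
    have e := congrArg (fun M => g * (sᴴ * (M * s))) hu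
    simp only [conjTranspose_mul, Matrix.mul_assoc, Matrix.one_mul, Matrix.mul_one,
      h1, h3, hg2] at e
    rw [Matrix.mul_assoc, ← e]
  obtain ⟨γ, hγ, γ', hγ', hne⟩ := hnonab
  have hXY := comm_of_comm (sᴴ * s) (γ : Matrix (Fin 2) (Fin 2) ℂ)
    (γ' : Matrix (Fin 2) (Fin 2) ℂ) (hcomm γ hγ) (hcomm γ' hγ') (by simpa [hs] using hP)
  exact hne (Subtype.ext (by push_cast; exact hXY))
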